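/- Let g : ℕ → ℝ≥0 satisfy liminf_{k→∞} g(q₀k)^{1/k} ≥ 1 for every q₀ ∈ ℕ. Suppose ξ ∈ ℝ satisfies |ξ − p/q| ≥ g(q) for all p ∈ ℤ, q ∈ ℕ. Let β = e^{2πiξ} and λ = e^{2πir} with r = p₀/q₀ ∈ ℚ, λ ≠ 1. Then limsup_{k→∞} (1/|β^k − λ|)^{1/k} ≤ 1. -/

import Mathlib

open Filter

lemma aux_abs_exp (x : ℝ) :
    ‖Complex.exp (2 * Real.pi * Complex.I * x) - 1‖
      = 2 * |Real.sin (Real.pi * x)| := by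
  have h : (2 * Real.pi * Complex.I * (x:ℂ)) = ((2 * Real.pi * x : ℝ) : ℂ) * Complex.I := by
    push_cast; ring
  rw [h, Complex.exp_mul_I, ← Complex.ofReal_cos, ← Complex.ofReal_sin]
  have h2 : (Real.cos (2*Real.pi*x) : ℂ) + (Real.sin (2*Real.pi*x) : ℂ) * Complex.I - 1
      = ((Real.cos (2*Real.pi*x) - 1 : ℝ) : ℂ) + ((Real.sin (2*Real.pi*x) : ℝ) : ℂ) * Complex.I := by
    push_cast; ring
  rw [h2, Complex.norm_add_mul_I]
  have hcos : Real.cos (2*Real.pi*x) = 1 - 2 * Real.sin (Real.pi*x) ^ 2 := by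
    have h1 := Real.cos_two_mul (Real.pi*x)
    have h3 := Real.sin_sq_add_cos_sq (Real.pi*x)
    rw [show 2*Real.pi*x = 2*(Real.pi*x) by ring]
    linarith
  have key : (Real.cos (2*Real.pi*x) - 1) ^ 2 + Real.sin (2*Real.pi*x) ^ 2
      = (2 * |Real.sin (Real.pi*x)|) ^ 2 := by
    have h4 := Real.sin_sq_add_cos_sq (2*Real.pi*x)
    have h5 := sq_abs (Real.sin (Real.pi*x))
    nlinarith
  rw [key, Real.sqrt_sq (by positivity)]

lemma aux_sin_lb (x : ℝ) : 2 * |x - round x| ≤ |Real.sin (Real.pi * x)| := by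
  set t := x - round x with ht_def
  have ht : |t| ≤ 1/2 := abs_sub_round x
  have hx : Real.pi * x = Real.pi * t + (round x : ℝ) * Real.pi := by
    rw [ht_def]; ring
  have hone : |((-1:ℝ)) ^ (round x)| = 1 := by
    rcases Int.even_or_odd (round x) with h | h
    · rw [h.neg_one_zpow]; simp
    · rw [h.neg_one_zpow]; simp
  rw [hx, Real.sin_add_int_mul_pi, abs_mul, hone, one_mul]
  have habs : |Real.sin (Real.pi * t)| = Real.sin (Real.pi * |t|) := by
    rcases abs_cases t with ⟨h1, h2⟩ | ⟨h1, h2⟩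
    · rw [h1]
      exact abs_of_nonneg (Real.sin_nonneg_of_nonneg_of_le_pi (by positivity)
        (by nlinarith [Real.pi_pos]))
    · rw [h1, show Real.pi * -t = -(Real.pi * t) by ring, Real.sin_neg]
      refine abs_of_nonpos ?_
      have h3 := Real.sin_nonneg_of_nonneg_of_le_pi (x := Real.pi * -t)
        (by nlinarith [Real.pi_pos]) (by nlinarith [Real.pi_pos])
      rw [show Real.pi * -t = -(Real.pi * t) by ring, Real.sin_neg] at h3
      linarith
  rw [habs]
  have := Real.mul_le_sin (x := Real.pi * |t|) (by positivity)
    (by nlinarith [Real.pi_pos, abs_nonneg t])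
  have hpi := Real.pi_pos
  calc 2 * |t| = 2 / Real.pi * (Real.pi * |t|) := by field_simp
    _ ≤ Real.sin (Real.pi * |t|) := this

theorem stmt_13 (g : ℕ → ℝ) (hg0 : ∀ q, 0 ≤ g q)
    (hliminf : ∀ q₀ : ℕ, 0 < q₀ →
      1 ≤ Filter.liminf (fun k : ℕ => (g (q₀ * k)) ^ ((1:ℝ)/k)) atTop)
    (ξ : ℝ) (hξ : ∀ p : ℤ, ∀ q : ℕ, 0 < q → g q ≤ |ξ - p / q|)
    (p₀ : ℤ) (q₀ : ℕ) (hq₀ : 0 < q₀)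
    (lam : ℂ) (hlam : lam = Complex.exp (2 * Real.pi * Complex.I * ((p₀ : ℝ) / q₀)))
    (hlam1 : lam ≠ 1)
    (β : ℂ) (hβ : β = Complex.exp (2 * Real.pi * Complex.I * ξ)) :
    Filter.limsup (fun k : ℕ => (1 / ‖β ^ k - lam‖) ^ ((1:ℝ)/k)) atTop ≤ 1 := by
  have hq₀R : (0:ℝ) < (q₀ : ℝ) := by exact_mod_cast hq₀
  -- Key pointwise bound
  have key : ∀ k : ℕ, 1 ≤ k → g (q₀ * k) ≤ ‖β ^ k - lam‖ := by
    intro k hk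
    have hkR : (0:ℝ) < (k : ℝ) := by exact_mod_cast hk
    set x : ℝ := (k : ℝ) * ξ - (p₀ : ℝ) / q₀ with hx_def
    have h1 : β ^ k - lam
        = Complex.exp (2 * Real.pi * Complex.I * ((p₀ : ℝ) / q₀))
          * (Complex.exp (2 * Real.pi * Complex.I * (x : ℂ)) - 1) := by
      rw [hβ, hlam, mul_sub, mul_one, ← Complex.exp_add, ← Complex.exp_nat_mul]
      congr 1
      push_cast [hx_def]
      ring
    have h2 : ‖β ^ k - lam‖
        = ‖Complex.exp (2 * Real.pi * Complex.I * (x : ℂ)) - 1‖ := by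
      rw [h1, norm_mul]
      have : ‖Complex.exp (2 * Real.pi * Complex.I * ((p₀ : ℝ) / q₀))‖ = 1 := by
        rw [show (2 * Real.pi * Complex.I * ((p₀ : ℝ) / q₀ : ℂ))
              = ((2 * Real.pi * ((p₀:ℝ)/q₀) : ℝ) : ℂ) * Complex.I by push_cast; ring,
          Complex.norm_exp_ofReal_mul_I]
      rw [this, one_mul]
    rw [h2, aux_abs_exp]
    set p : ℤ := round x with hp_def
    have hdist : g (q₀ * k) * k ≤ |x - p| := by
      have hstep : x - p = (k : ℝ) * (ξ - ((p₀ + p * q₀ : ℤ) : ℝ) / ((q₀ * k : ℕ) : ℝ)) := by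
        have hq0 : (q₀:ℝ) ≠ 0 := ne_of_gt hq₀R
        have hkne : (k:ℝ) ≠ 0 := ne_of_gt hkR
        push_cast
        field_simp
        linear_combination (-(p₀:ℝ)) * mul_inv_cancel₀ hq0
      rw [hstep, abs_mul, abs_of_pos hkR]
      have := hξ (p₀ + p * q₀) (q₀ * k) (by positivity)
      nlinarith [hg0 (q₀ * k)]
    have hsin := aux_sin_lb x
    rw [← hp_def] at hsin
    have hg := hg0 (q₀ * k)
    have hk1R : (1:ℝ) ≤ (k:ℝ) := by exact_mod_cast hk
    nlinarith [abs_nonneg (x - (p:ℝ)), mul_nonneg hg (by linarith : (0:ℝ) ≤ (k:ℝ) - 1)]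
  -- limsup bound
  refine le_of_forall_gt_imp_ge_of_dense ?_
  intro c hc
  have hcpos : (0:ℝ) < c := lt_trans one_pos hc
  have h1c : (1:ℝ)/c < 1 := by rw [div_lt_one hcpos]; exact hc
  have hlt : (1:ℝ)/c < Filter.liminf (fun k : ℕ => (g (q₀ * k)) ^ ((1:ℝ)/k)) atTop :=
    lt_of_lt_of_le h1c (hliminf q₀ hq₀)
  have hbdd : IsBoundedUnder (· ≥ ·) atTop (fun k : ℕ => (g (q₀ * k)) ^ ((1:ℝ)/k)) :=
    isBoundedUnder_of_eventually_ge (a := 0)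
      (Eventually.of_forall fun k => Real.rpow_nonneg (hg0 _) _)
  have hev := eventually_lt_of_lt_liminf hlt hbdd
  have hev2 : ∀ᶠ k : ℕ in atTop, (1 / ‖β ^ k - lam‖) ^ ((1:ℝ)/k) ≤ c := by
    filter_upwards [hev, eventually_ge_atTop 1] with k hk1 hk2
    have hkR : (0:ℝ) < (k : ℝ) := by exact_mod_cast hk2
    have hgpos : 0 < g (q₀ * k) := by
      rcases lt_or_eq_of_le (hg0 (q₀ * k)) with h | h
      · exact h
      · exfalso
        rw [← h, Real.zero_rpow (by positivity : (1:ℝ)/(k:ℝ) ≠ 0)] at hk1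
        have : (0:ℝ) < 1/c := by positivity
        linarith
    have hb := key k hk2
    have habs_pos : 0 < ‖β ^ k - lam‖ := lt_of_lt_of_le hgpos hb
    calc (1 / ‖β ^ k - lam‖) ^ ((1:ℝ)/k)
        ≤ (1 / g (q₀ * k)) ^ ((1:ℝ)/k) :=
          Real.rpow_le_rpow (by positivity) (one_div_le_one_div_of_le hgpos hb) (by positivity)
      _ = ((g (q₀ * k)) ^ ((1:ℝ)/k))⁻¹ := by
          rw [one_div, Real.inv_rpow (hg0 _)]
      _ ≤ c := by
          rw [inv_le_comm₀ (Real.rpow_pos_of_pos hgpos _) hcpos]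
          rw [one_div] at hk1
          exact hk1.le
  refine limsup_le_of_le ?_ hev2
  exact isCoboundedUnder_le_of_le atTop (x := 0)
    (fun k => Real.rpow_nonneg (by positivity) _)
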